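/- Let V : ℝ^d → ℝ be measurable with ∫ e^{-V} dx = 1, let K : L¹ ∩ L² → L^∞ be a linear map with adjoint K* satisfying ‖K*(e^{-V})‖_{L^∞} ≤ ζ, and let ρ ∈ L¹ ∩ L² with ρ ≥ 0 and ‖ρ‖_{L¹} ≤ 1. Then ∫ e^{-V(x) - (Kρ)(x)} dx ≥ e^{-ζ}. -/

import Mathlib

open MeasureTheory

theorem mass_lower_bound {d : ℕ}
    (V : (Fin d → ℝ) → ℝ) (hVmeas : Measurable V)
    (hV : ∫ x, Real.exp (-V x) = 1)
    (K Ks : ((Fin d → ℝ) → ℝ) → ((Fin d → ℝ) → ℝ))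
    (hKlin : IsLinearMap ℝ K)
    (hadj : ∀ f g : (Fin d → ℝ) → ℝ,
      ∫ x, K f x * g x = ∫ x, f x * Ks g x)
    (ζ : ℝ)
    (hKs : ∀ x, |Ks (fun y => Real.exp (-V y)) x| ≤ ζ)
    (ρ : (Fin d → ℝ) → ℝ) (hρpos : ∀ x, 0 ≤ ρ x)
    (hρL1 : Integrable ρ) (hρL2 : MemLp ρ 2)
    (hρmass : ∫ x, ρ x ≤ 1)
    (hint : Integrable (fun x => Real.exp (-V x - K ρ x)))
    (hKρint : Integrable (fun x => K ρ x * Real.exp (-V x))) :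
    Real.exp (-ζ) ≤ ∫ x, Real.exp (-V x - K ρ x) := by
  -- ζ is nonnegative
  have hζ0 : 0 ≤ ζ := le_trans (abs_nonneg _) (hKs (fun _ => 0))
  -- integrability of e^{-V}
  have heVint : Integrable (fun x => Real.exp (-V x)) := by
    by_contra h
    rw [integral_undef h] at hV
    exact one_ne_zero hV.symm
  -- the NNReal density
  set w : (Fin d → ℝ) → NNReal := fun x => Real.toNNReal (Real.exp (-V x)) with hw
  have hwmeas : Measurable w := (hVmeas.neg.exp).real_toNNReal
  have hwcoe : ∀ x, (w x : ℝ) = Real.exp (-V x) := fun x =>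
    Real.coe_toNNReal _ (Real.exp_nonneg _)
  set μ : Measure (Fin d → ℝ) := volume.withDensity (fun x => (w x : ENNReal)) with hμ
  have hconv : ∀ g : (Fin d → ℝ) → ℝ,
      ∫ x, g x ∂μ = ∫ x, Real.exp (-V x) * g x := by
    intro g
    rw [hμ, integral_withDensity_eq_integral_smul hwmeas]
    simp only [NNReal.smul_def, smul_eq_mul, hwcoe]
  have hprob : IsProbabilityMeasure μ := by
    constructor
    rw [hμ, withDensity_apply _ MeasurableSet.univ, Measure.restrict_univ,
      lintegral_coe_eq_integral _ (by simpa only [hwcoe] using heVint)]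
    simp only [hwcoe]
    rw [hV]
    simp
  -- Jensen's inequality with f = -Kρ, g = exp
  have hfi : Integrable (fun x => -(K ρ x)) μ := by
    rw [hμ, integrable_withDensity_iff_integrable_smul hwmeas]
    simp only [NNReal.smul_def, smul_eq_mul, hwcoe]
    exact (hKρint.neg.congr (Filter.Eventually.of_forall fun x => by
      simp only [Pi.neg_apply]; ring))
  have hgi : Integrable (fun x => Real.exp (-(K ρ x))) μ := by
    rw [hμ, integrable_withDensity_iff_integrable_smul hwmeas]
    simp only [NNReal.smul_def, smul_eq_mul, hwcoe]
    exact hint.congr (by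
      filter_upwards with x
      rw [Real.exp_sub, Real.exp_neg (K ρ x), div_eq_mul_inv])
  have hjensen := (convexOn_exp.subset (Set.subset_univ _) convex_univ).map_integral_le
    (μ := μ) (f := fun x => -(K ρ x)) Real.continuous_exp.continuousOn isClosed_univ
    (Filter.Eventually.of_forall fun x => Set.mem_univ _) hfi hgi
  -- rewrite the two integrals
  have hleft : ∫ x, Real.exp (-(K ρ x)) ∂μ = ∫ x, Real.exp (-V x - K ρ x) := by
    rw [hconv]
    congr 1; funext x; rw [sub_eq_add_neg, Real.exp_add]
  -- the mean of -Kρ under μ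
  have hmean : ∫ x, -(K ρ x) ∂μ = -∫ x, ρ x * Ks (fun y => Real.exp (-V y)) x := by
    rw [hconv]
    have h1 : ∫ x, Real.exp (-V x) * -(K ρ x) = -∫ x, K ρ x * Real.exp (-V x) := by
      rw [← integral_neg]; congr 1; funext x; ring
    rw [h1, hadj ρ (fun y => Real.exp (-V y))]
  have hbound : ∫ x, ρ x * Ks (fun y => Real.exp (-V y)) x ≤ ζ := by
    by_cases hI : Integrable (fun x => ρ x * Ks (fun y => Real.exp (-V y)) x)
    · calc ∫ x, ρ x * Ks (fun y => Real.exp (-V y)) x ≤ ∫ x, ζ * ρ x := by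
            apply integral_mono hI (hρL1.const_mul ζ)
            intro x
            calc ρ x * Ks (fun y => Real.exp (-V y)) x
                ≤ ρ x * ζ := mul_le_mul_of_nonneg_left
                  (le_trans (le_abs_self _) (hKs x)) (hρpos x)
              _ = ζ * ρ x := mul_comm _ _
        _ = ζ * ∫ x, ρ x := integral_const_mul ζ ρ
        _ ≤ ζ * 1 := mul_le_mul_of_nonneg_left hρmass hζ0
        _ = ζ := mul_one ζ
    · rw [integral_undef hI]; exact hζ0
  calc Real.exp (-ζ) ≤ Real.exp (∫ x, -(K ρ x) ∂μ) := by
        apply Real.exp_le_exp.mpr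
        rw [hmean]
        linarith
    _ ≤ ∫ x, Real.exp (-(K ρ x)) ∂μ := by
        simpa using hjensen
    _ = ∫ x, Real.exp (-V x - K ρ x) := hleft
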